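/- Every rational number r with 0 < r < 1 has a unique representation of the form r = ∑_{j=1}^k ∏_{i=1}^j (1/n_i), where k ≥ 1 and n_1, n_2, …, n_k are integers with 2 ≤ n_1 ≤ n_2 ≤ ⋯ ≤ n_k. -/

import Mathlib

private def esum : List ℕ → ℚ
  | [] => 0
  | n :: t => (1 + esum t) / n

private lemma sum_eq (l : List ℕ) :
    (∑ j ∈ Finset.range l.length, ((l.take (j + 1)).map fun n => (1 : ℚ) / n).prod) = esum l := by
  induction l with
  | nil => simp [esum]
  | cons n t ih =>
    rw [esum, ← ih]
    simp only [List.length_cons]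
    rw [Finset.sum_range_succ']
    have key : ∀ L : List ℕ, (((n :: L)).map fun m => (1 : ℚ) / m).prod
        = (1 / (n : ℚ)) * ((L.map fun m => (1 : ℚ) / m).prod) := by
      intro L; simp
    simp only [List.take_succ_cons, key, List.take_zero, List.map_nil, List.prod_nil, mul_one]
    rw [← Finset.mul_sum, ih]
    simp
    ring

private lemma esum_bounds (t : List ℕ) : ∀ n : ℕ, (n :: t).Pairwise (· ≤ ·) →
    (∀ x ∈ n :: t, 2 ≤ x) →
    1 / (n : ℚ) ≤ esum (n :: t) ∧ esum (n :: t) < 1 / ((n : ℚ) - 1) := by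
  induction t with
  | nil =>
    intro n _ h2
    have hn : (2 : ℚ) ≤ n := by exact_mod_cast h2 n (by simp)
    have h1 : (0 : ℚ) < (n : ℚ) - 1 := by linarith
    have h0 : (0 : ℚ) < n := by linarith
    refine ⟨by simp [esum], ?_⟩
    show (1 + esum []) / n < 1 / ((n : ℚ) - 1)
    rw [esum, div_lt_div_iff₀ h0 h1]
    ring_nf
    linarith
  | cons m t' ih =>
    intro n hs h2
    obtain ⟨hhead, htail⟩ := List.pairwise_cons.mp hs
    have hnm : n ≤ m := hhead m (by simp)
    have hn : (2 : ℚ) ≤ n := by exact_mod_cast h2 n (by simp)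
    have hm : (2 : ℚ) ≤ m := by exact_mod_cast h2 m (by simp)
    have hnm' : (n : ℚ) ≤ m := by exact_mod_cast hnm
    have h0 : (0 : ℚ) < n := by linarith
    have h1 : (0 : ℚ) < (n : ℚ) - 1 := by linarith
    obtain ⟨ihl, ihu⟩ := ih m htail (fun x hx => h2 x (List.mem_cons_of_mem _ hx))
    have hpos : (0 : ℚ) < esum (m :: t') := lt_of_lt_of_le (by positivity) ihl
    have hu : esum (m :: t') ≤ 1 / ((n : ℚ) - 1) := by
      refine le_of_lt (lt_of_lt_of_le ihu ?_)
      apply one_div_le_one_div_of_le h1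
      linarith
    constructor
    · show 1 / (n : ℚ) ≤ (1 + esum (m :: t')) / n
      gcongr
      linarith
    · show (1 + esum (m :: t')) / n < 1 / ((n : ℚ) - 1)
      rw [div_lt_div_iff₀ h0 h1]
      have hu' : esum (m :: t') < 1 / ((n : ℚ) - 1) :=
        lt_of_lt_of_le ihu (by apply one_div_le_one_div_of_le h1; linarith)
      have : (1 + esum (m :: t')) * ((n:ℚ) - 1) < (1 + 1/((n:ℚ)-1)) * ((n:ℚ)-1) := by
        apply mul_lt_mul_of_pos_right _ h1
        linarith
      have heq : (1 + 1/((n:ℚ)-1)) * ((n:ℚ)-1) = n := by field_simp; ring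
      linarith

private lemma esum_inj : ∀ l₁ : List ℕ, ∀ l₂ : List ℕ, l₁ ≠ [] → l₂ ≠ [] →
    l₁.Pairwise (· ≤ ·) → l₂.Pairwise (· ≤ ·) → (∀ x ∈ l₁, 2 ≤ x) → (∀ x ∈ l₂, 2 ≤ x) →
    esum l₁ = esum l₂ → l₁ = l₂ := by
  intro l₁
  induction l₁ with
  | nil => intro l₂ h; exact absurd rfl h
  | cons n t ih =>
    intro l₂ _ hne2 hs1 hs2 h21 h22 heq
    obtain ⟨m, t₂, rfl⟩ := List.exists_cons_of_ne_nil hne2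
    -- heads are equal
    have hb1 := esum_bounds t n hs1 h21
    have hb2 := esum_bounds t₂ m hs2 h22
    have hn : (2 : ℚ) ≤ n := by exact_mod_cast h21 n (by simp)
    have hm : (2 : ℚ) ≤ m := by exact_mod_cast h22 m (by simp)
    have hnm : n = m := by
      have h1 : 1 / (n : ℚ) < 1 / ((m : ℚ) - 1) := lt_of_le_of_lt (heq ▸ hb1.1) hb2.2
      have h2 : 1 / (m : ℚ) < 1 / ((n : ℚ) - 1) := lt_of_le_of_lt (heq ▸ hb2.1) hb1.2
      have c1 : (m : ℚ) - 1 < n := by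
        rw [div_lt_div_iff₀ (by linarith) (by linarith)] at h1; linarith
      have c2 : (n : ℚ) - 1 < m := by
        rw [div_lt_div_iff₀ (by linarith) (by linarith)] at h2; linarith
      have e1 : m < n + 1 := by exact_mod_cast (by linarith : (m:ℚ) < n + 1)
      have e2 : n < m + 1 := by exact_mod_cast (by linarith : (n:ℚ) < m + 1)
      omega
    subst hnm
    -- tails are equal
    have hn0 : (n : ℚ) ≠ 0 := by linarith
    have htl : esum t = esum t₂ := by
      have : (1 + esum t) / n = (1 + esum t₂) / n := heq
      field_simp at this
      linarith
    rcases t with _ | ⟨a, t'⟩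
    · rcases t₂ with _ | ⟨b, t₂'⟩
      · rfl
      · exfalso
        have hb := esum_bounds t₂' b ((List.pairwise_cons.mp hs2).2)
          (fun x hx => h22 x (List.mem_cons_of_mem _ hx))
        have hbp : (0 : ℚ) < esum (b :: t₂') := by
          have h2b : (2:ℚ) ≤ b := by exact_mod_cast h22 b (by simp)
          exact lt_of_lt_of_le (by positivity) hb.1
        rw [show esum ([] : List ℕ) = 0 from rfl] at htl
        linarith [htl]
    · rcases t₂ with _ | ⟨b, t₂'⟩
      · exfalso
        have hb := esum_bounds t' a ((List.pairwise_cons.mp hs1).2)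
          (fun x hx => h21 x (List.mem_cons_of_mem _ hx))
        have hbp : (0 : ℚ) < esum (a :: t') := by
          have h2a : (2:ℚ) ≤ a := by exact_mod_cast h21 a (by simp)
          exact lt_of_lt_of_le (by positivity) hb.1
        rw [show esum ([] : List ℕ) = 0 from rfl] at htl
        linarith [htl]
      · have := ih (b :: t₂') (by simp) (by simp)
          ((List.pairwise_cons.mp hs1).2) ((List.pairwise_cons.mp hs2).2)
          (fun x hx => h21 x (List.mem_cons_of_mem _ hx))
          (fun x hx => h22 x (List.mem_cons_of_mem _ hx)) htl
        rw [this]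

private lemma exists_rep : ∀ (p : ℕ) (r : ℚ), r.num.toNat ≤ p → 0 < r → r < 1 →
    ∃ l : List ℕ, l ≠ [] ∧ l.Pairwise (· ≤ ·) ∧ (∀ x ∈ l, 2 ≤ x) ∧
      (∀ x ∈ l, (1 : ℚ) / x ≤ r) ∧ esum l = r := by
  intro p
  induction p with
  | zero =>
    intro r hp h0 _
    exfalso
    have : 0 < r.num := Rat.num_pos.mpr h0
    omega
  | succ p ih =>
    intro r hp h0 h1
    have hrinv : (1 : ℚ) < r⁻¹ := one_lt_inv₀ h0 |>.mpr h1
    set n : ℤ := ⌈r⁻¹⌉ with hn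
    have hn2 : 2 ≤ n := by
      have : (1 : ℤ) < n := by rw [hn, Int.lt_ceil]; exact_mod_cast hrinv
      omega
    have hnQ : (2 : ℚ) ≤ (n : ℚ) := by exact_mod_cast hn2
    have hle : r⁻¹ ≤ (n : ℚ) := Int.le_ceil _
    have hgt : (n : ℚ) < r⁻¹ + 1 := Int.ceil_lt_add_one _
    have hrn : 1 / (n : ℚ) ≤ r := by
      rw [div_le_iff₀ (by linarith)]
      calc (1 : ℚ) = r⁻¹ * r := by field_simp
        _ ≤ n * r := by apply mul_le_mul_of_nonneg_right hle (le_of_lt h0)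
        _ = r * n := mul_comm _ _
    have hr'0 : 0 ≤ (n : ℚ) * r - 1 := by
      have : (1 : ℚ) = r⁻¹ * r := by field_simp
      nlinarith
    have hinv : r⁻¹ * r = 1 := inv_mul_cancel₀ (ne_of_gt h0)
    have hr'r : (n : ℚ) * r - 1 < r := by nlinarith [mul_lt_mul_of_pos_right hgt h0]
    set r' : ℚ := n * r - 1 with hr'
    rcases eq_or_lt_of_le hr'0 with hz | hpos
    · -- r = 1/n exactly
      refine ⟨[n.toNat], by simp, List.pairwise_singleton _ _, ?_, ?_, ?_⟩
      · intro x hx; simp at hx; subst hx; omega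
      · intro x hx; simp at hx; subst hx
        rwa [show ((n.toNat : ℚ)) = (n : ℚ) by exact_mod_cast Int.toNat_of_nonneg (by omega)]
      · show (1 + esum []) / (n.toNat : ℚ) = r
        rw [show esum ([] : List ℕ) = 0 from rfl,
          show ((n.toNat : ℚ)) = (n : ℚ) by exact_mod_cast Int.toNat_of_nonneg (by omega)]
        have : (n : ℚ) * r = 1 := by linarith [hz]
        rw [eq_comm, eq_div_iff (by linarith : (n:ℚ) ≠ 0)]
        linarith
    · -- recursive case
      -- numerator of r' is smaller
      have hq0 : (0 : ℚ) < (r.den : ℚ) := by exact_mod_cast r.pos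
      have hnum0 : 0 < r.num := Rat.num_pos.mpr h0
      have hmul : (r.num : ℚ) = r * r.den := (Rat.mul_den_eq_num r).symm
      have hr'eq : r' = ((n * r.num - r.den : ℤ) : ℚ) / ((r.den : ℤ) : ℚ) := by
        rw [hr', eq_div_iff (by exact_mod_cast ne_of_gt hq0 : ((r.den : ℤ) : ℚ) ≠ 0)]
        push_cast
        rw [hmul]
        ring
      have ha0 : 0 < n * r.num - r.den := by
        by_contra hc
        push_neg at hc
        have : ((n * r.num - r.den : ℤ) : ℚ) ≤ 0 := by exact_mod_cast hc
        have : r' ≤ 0 := by rw [hr'eq]; apply div_nonpos_of_nonpos_of_nonneg this (le_of_lt hq0)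
        linarith
      have hnumlt : r'.num < r.num := by
        have hdvd : r'.num ∣ n * r.num - r.den := by
          have : r' = Rat.divInt (n * r.num - r.den) (r.den : ℤ) := by
            rw [Rat.divInt_eq_div]; exact_mod_cast hr'eq
          rw [this]
          exact Rat.num_dvd _ (by exact_mod_cast r.den_nz)
        have hle' : r'.num ≤ n * r.num - r.den := Int.le_of_dvd ha0 hdvd
        have hlt2 : n * r.num - r.den < r.num := by
          have hq : (n : ℚ) * r < 1 + r := by linarith
          have h2 : (n : ℚ) * r.num < r.den + r.num := by
            have := mul_lt_mul_of_pos_right hq hq0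
            rw [hmul]
            nlinarith [this]
          have h3 : ((n * r.num : ℤ) : ℚ) < ((r.den + r.num : ℤ) : ℚ) := by push_cast; linarith
          have h4 : (n * r.num : ℤ) < (r.den + r.num : ℤ) := by exact_mod_cast h3
          omega
        omega
      have hr'1 : r' < 1 := lt_trans hr'r h1
      have hp' : r'.num.toNat ≤ p := by
        have := Rat.num_pos.mpr hpos
        omega
      obtain ⟨l, hlne, hls, hl2, hlb, hle2⟩ := ih r' hp' hpos hr'1
      -- all elements of l are ≥ n
      have hmem : ∀ x ∈ l, n.toNat ≤ x := by
        intro x hx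
        have hx2 : 2 ≤ x := hl2 x hx
        have hxb : (1 : ℚ) / x ≤ r' := hlb x hx
        have hxQ : (0 : ℚ) < x := by exact_mod_cast Nat.lt_of_lt_of_le (by norm_num) hx2
        -- r' < 1/(n-1)
        have hr'small : r' < 1 / ((n : ℚ) - 1) := by
          rw [lt_div_iff₀ (by linarith)]
          have : r * ((n : ℚ) - 1) < 1 := by
            have h3 : (n : ℚ) - 1 < r⁻¹ := by linarith
            calc r * ((n : ℚ) - 1) < r * r⁻¹ := by
                  apply mul_lt_mul_of_pos_left h3 h0
              _ = 1 := by field_simp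
          nlinarith
        have : (1 : ℚ) / x < 1 / ((n : ℚ) - 1) := lt_of_le_of_lt hxb hr'small
        have hc : (n : ℚ) - 1 < x := by
          rw [div_lt_div_iff₀ hxQ (by linarith)] at this
          linarith
        have h5 : ((n - 1 : ℤ) : ℚ) < ((x : ℤ) : ℚ) := by push_cast; linarith
        have h6 : (n - 1 : ℤ) < (x : ℤ) := by exact_mod_cast h5
        omega
      refine ⟨n.toNat :: l, by simp, ?_, ?_, ?_, ?_⟩
      · exact List.pairwise_cons.mpr ⟨hmem, hls⟩
      · intro x hx
        rcases List.mem_cons.mp hx with h | h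
        · subst h; omega
        · exact hl2 x h
      · intro x hx
        rcases List.mem_cons.mp hx with h | h
        · subst h
          rwa [show ((n.toNat : ℚ)) = (n : ℚ) by exact_mod_cast Int.toNat_of_nonneg (by omega)]
        · exact le_trans (hlb x h) (by linarith)
      · show (1 + esum l) / (n.toNat : ℚ) = r
        rw [hle2, show ((n.toNat : ℚ)) = (n : ℚ) by exact_mod_cast Int.toNat_of_nonneg (by omega)]
        rw [eq_comm, eq_div_iff (by linarith : (n:ℚ) ≠ 0)]
        rw [hr']
        ring

theorem stmt_18 (r : ℚ) (h0 : 0 < r) (h1 : r < 1) :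
    ∃! l : List ℕ,
      l ≠ [] ∧ l.Pairwise (· ≤ ·) ∧ (∀ x ∈ l, 2 ≤ x) ∧
      r = ∑ j ∈ Finset.range l.length, ((l.take (j + 1)).map fun n => (1 : ℚ) / n).prod := by
  obtain ⟨l, hne, hs, h2, _, he⟩ := exists_rep r.num.toNat r le_rfl h0 h1
  refine ⟨l, ⟨hne, hs, h2, by rw [sum_eq]; exact he.symm⟩, ?_⟩
  intro l' ⟨hne', hs', h2', he'⟩
  have h' : esum l' = r := by rw [← sum_eq]; exact he'.symm
  exact esum_inj l' l hne' hne hs' hs h2' h2 (h'.trans he.symm)
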